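/- For all integers k ≥ 1 and r ≥ 1, Σ_{s=0}^{k} [−3·(2k)!·(2r+3)!·(k+1−s)·(r−1+s)! / ((r−1)!·(2k+2r+2)!·s!)] = −3·(2k−1)!!·(2r+3)!!/(2k+2r+1)!!, an identity of rational numbers. -/

import Mathlib

open Finset

lemma hockey11 (r : ℕ) (hr : 1 ≤ r) (n : ℕ) :
    ∑ s ∈ Finset.range (n+1), Nat.choose (r-1+s) s = Nat.choose (r+n) n := by
  induction n with
  | zero => simp
  | succ n ih =>
    rw [Finset.sum_range_succ, ih]
    have h1 : r - 1 + (n+1) = r + n := by omega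
    rw [h1]
    exact (Nat.choose_succ_succ (r+n) n).symm

lemma keysum11 (r : ℕ) (hr : 1 ≤ r) (k : ℕ) :
    ∑ s ∈ Finset.range (k+1), (k+1-s) * Nat.choose (r-1+s) s = Nat.choose (k+r+1) k := by
  induction k with
  | zero => simp
  | succ k ih =>
    have split : ∑ s ∈ Finset.range (k+2), (k+2-s) * Nat.choose (r-1+s) s
        = (∑ s ∈ Finset.range (k+2), (k+1-s) * Nat.choose (r-1+s) s)
          + ∑ s ∈ Finset.range (k+2), Nat.choose (r-1+s) s := by
      rw [← Finset.sum_add_distrib]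
      apply Finset.sum_congr rfl
      intro s hs
      simp only [Finset.mem_range] at hs
      have : k+2-s = (k+1-s) + 1 := by omega
      rw [this, add_mul, one_mul]
    rw [split, Finset.sum_range_succ, Nat.sub_self, zero_mul, add_zero, ih,
      hockey11 r hr (k+1)]
    have h2 : k + 1 + r + 1 = (k + r + 1) + 1 := by ring
    have h3 : r + (k+1) = k + r + 1 := by ring
    rw [h2, h3]
    exact (Nat.choose_succ_succ (k+r+1) k).symm

theorem stmt11 (k r : ℕ) (hk : 1 ≤ k) (hr : 1 ≤ r) :
    ∑ s ∈ Finset.range (k+1),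
      (-3 * ((2*k).factorial : ℚ) * ((2*r+3).factorial : ℚ)
          * ((k+1-s : ℕ) : ℚ) * ((r-1+s).factorial : ℚ))
        / (((r-1).factorial : ℚ) * ((2*k+2*r+2).factorial : ℚ) * (s.factorial : ℚ))
      = -3 * ((2*k-1).doubleFactorial : ℚ) * ((2*r+3).doubleFactorial : ℚ)
          / ((2*k+2*r+1).doubleFactorial : ℚ) := by
  have hD : ((2*k+2*r+2).factorial : ℚ) ≠ 0 := by positivity
  have step1 : ∑ s ∈ Finset.range (k+1),
      (-3 * ((2*k).factorial : ℚ) * ((2*r+3).factorial : ℚ)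
          * ((k+1-s : ℕ) : ℚ) * ((r-1+s).factorial : ℚ))
        / (((r-1).factorial : ℚ) * ((2*k+2*r+2).factorial : ℚ) * (s.factorial : ℚ))
      = (-3 * ((2*k).factorial : ℚ) * ((2*r+3).factorial : ℚ) / ((2*k+2*r+2).factorial : ℚ))
        * ((∑ s ∈ Finset.range (k+1), (k+1-s) * Nat.choose (r-1+s) s : ℕ) : ℚ) := by
    push_cast
    rw [Finset.mul_sum]
    apply Finset.sum_congr rfl
    intro s hs
    have hc : (Nat.choose (r-1+s) s : ℚ) * (s.factorial : ℚ) * ((r-1).factorial : ℚ)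
        = ((r-1+s).factorial : ℚ) := by
      have := Nat.choose_mul_factorial_mul_factorial (Nat.le_add_left s (r-1))
      have h4 : r - 1 + s - s = r - 1 := by omega
      rw [h4] at this
      exact_mod_cast this
    have hs1 : (s.factorial : ℚ) ≠ 0 := by positivity
    have hr1 : ((r-1).factorial : ℚ) ≠ 0 := by positivity
    rw [← hc]
    field_simp
  rw [step1, keysum11 r hr k]
  -- now pure rational identity
  have e1 : ((2*k+2*r+2).factorial : ℚ)
      = 2^(k+r+1) * ((k+r+1).factorial : ℚ) * ((2*k+2*r+1).doubleFactorial : ℚ) := by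
    have h := Nat.factorial_eq_mul_doubleFactorial (2*k+2*r+1)
    have h2 : 2*k+2*r+1+1 = 2*(k+r+1) := by ring
    rw [h2, Nat.doubleFactorial_two_mul] at h
    rw [show 2*(k+r+1) = 2*k+2*r+2 from by ring] at h
    exact_mod_cast h
  have e2 : ((2*k).factorial : ℚ) = 2^k * (k.factorial : ℚ) * ((2*k-1).doubleFactorial : ℚ) := by
    have h := Nat.factorial_eq_mul_doubleFactorial (2*k-1)
    have h2 : 2*k-1+1 = 2*k := by omega
    rw [h2, Nat.doubleFactorial_two_mul] at h
    exact_mod_cast h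
  have e3 : ((2*r+3).factorial : ℚ)
      = ((2*r+3).doubleFactorial : ℚ) * (2^(r+1) * ((r+1).factorial : ℚ)) := by
    have h := Nat.factorial_eq_mul_doubleFactorial (2*r+2)
    have h2 : 2*r+2+1 = 2*r+3 := by ring
    have h3 : 2*r+2 = 2*(r+1) := by ring
    rw [h2, h3, Nat.doubleFactorial_two_mul] at h
    exact_mod_cast h
  have e4 : ((Nat.choose (k+r+1) k : ℕ) : ℚ) * (k.factorial : ℚ) * ((r+1).factorial : ℚ)
      = ((k+r+1).factorial : ℚ) := by
    have := Nat.choose_mul_factorial_mul_factorial (show k ≤ k+r+1 by omega)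
    have h4 : k + r + 1 - k = r + 1 := by omega
    rw [h4] at this
    exact_mod_cast this
  have hdf1 : ((2*k+2*r+1).doubleFactorial : ℚ) ≠ 0 := by
    exact_mod_cast (Nat.doubleFactorial_pos _).ne'
  have hk1 : (k.factorial : ℚ) ≠ 0 := by positivity
  have hr1 : ((r+1).factorial : ℚ) ≠ 0 := by positivity
  have hkr1 : ((k+r+1).factorial : ℚ) ≠ 0 := by positivity
  have den1 : (2:ℚ)^(k+r+1) * ((k+r+1).factorial : ℚ) * ((2*k+2*r+1).doubleFactorial : ℚ) ≠ 0 := by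
    positivity
  rw [e1, e2, e3, div_mul_eq_mul_div, div_eq_div_iff den1 hdf1]
  linear_combination (-3 * ((2*k-1).doubleFactorial : ℚ) * ((2*r+3).doubleFactorial : ℚ)
    * ((2*k+2*r+1).doubleFactorial : ℚ) * 2^(k+r+1)) * e4
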